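/- Let G = Z_n, 2 ≤ k ≤ n-1, and x₁, x₂ ∈ Z_n with gcd(x₁, n) = gcd(x₂, n). Then (Z_n, B_k^{x₁}) is a 1-design if and only if (Z_n, B_k^{x₂}) is a 1-design. -/

import Mathlib

open Finset

/-- The family of `k`-element subsets of `G` whose elements sum to `x`. -/
def sumBlocks (G : Type) [AddCommGroup G] [Fintype G] [DecidableEq G]
    (k : ℕ) (x : G) : Finset (Finset G) :=
  Finset.univ.filter (fun T => T.card = k ∧ T.sum id = x)

/-- The family of `k`-element subsets of `G \ {0}` whose elements sum to `x`. -/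
def sumBlocksStar (G : Type) [AddCommGroup G] [Fintype G] [DecidableEq G]
    (k : ℕ) (x : G) : Finset (Finset G) :=
  Finset.univ.filter (fun T => T.card = k ∧ T.sum id = x ∧ (0 : G) ∉ T)

/-- `(G, B_k^x)` is a 1-design: the block family is nonempty and every
point of `G` lies in the same number of blocks. -/
def isOneDesign (G : Type) [AddCommGroup G] [Fintype G] [DecidableEq G]
    (k : ℕ) (x : G) : Prop :=
  sumBlocks G k x ≠ ∅ ∧ ∃ r : ℕ, ∀ y : G,
    ((sumBlocks G k x).filter (fun B => y ∈ B)).card = r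

/-- `e(x) = max {d : d ∣ exp(G), x ∈ dG}`. -/
noncomputable def eMax (G : Type) [AddCommGroup G] [Fintype G] [DecidableEq G] (x : G) : ℕ :=
  Nat.findGreatest (fun d => d ∣ AddMonoid.exponent G ∧ ∃ y : G, d • y = x)
    (AddMonoid.exponent G)


lemma gcd_of_unit_mul (n : ℕ) [NeZero n] (u : (ZMod n)ˣ) (d : ℕ) :
    Nat.gcd ((u : ZMod n) * (d : ZMod n)).val n = Nat.gcd d n := by
  rw [ZMod.val_mul, ← Nat.gcd_rec, Nat.gcd_comm,
    Nat.Coprime.gcd_mul_left_cancel _ (ZMod.val_coe_unit_coprime u), ZMod.val_natCast,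
    ← Nat.gcd_rec, Nat.gcd_comm]

lemma exists_unit_mul_gcd (n : ℕ) [NeZero n] (a : ZMod n) :
    ∃ u : (ZMod n)ˣ, a = (u : ZMod n) * (Nat.gcd a.val n : ZMod n) := by
  obtain ⟨d, hdn, v, hv, ha⟩ := ZMod.eq_unit_mul_divisor a
  refine ⟨hv.unit, ?_⟩
  have hgcd : Nat.gcd a.val n = d := by
    have := gcd_of_unit_mul n hv.unit d
    rw [hv.unit_spec] at this
    rw [ha, this, Nat.gcd_eq_left hdn]
  rw [hgcd, ha, hv.unit_spec]

lemma mem_sumBlocks (n k : ℕ) [NeZero n] (x : ZMod n) (B : Finset (ZMod n)) :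
    B ∈ sumBlocks (ZMod n) k x ↔ B.card = k ∧ B.sum id = x := by
  simp [sumBlocks]

lemma unit_mul_design (n k : ℕ) [NeZero n] (u : (ZMod n)ˣ) (x : ZMod n)
    (h : isOneDesign (ZMod n) k x) : isOneDesign (ZMod n) k ((u : ZMod n) * x) := by
  obtain ⟨hne, r, hr⟩ := h
  set φ : Finset (ZMod n) → Finset (ZMod n) := fun B => B.image (fun t => (u : ZMod n) * t)
    with hφdef
  set ψ : Finset (ZMod n) → Finset (ZMod n) := fun B => B.image (fun t => ((u⁻¹ : (ZMod n)ˣ) : ZMod n) * t) with hψdef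
  have hinj : Function.Injective (fun t : ZMod n => (u : ZMod n) * t) :=
    fun a b hab => by simpa using congrArg (fun z => ((u⁻¹ : (ZMod n)ˣ) : ZMod n) * z) hab
  have hψφ : ∀ B, ψ (φ B) = B := by
    intro B
    simp only [hφdef, hψdef, Finset.image_image]
    have : ((fun t => ((u⁻¹ : (ZMod n)ˣ) : ZMod n) * t) ∘ (fun t => (u : ZMod n) * t)) = id := by
      funext t; simp [← mul_assoc]
    rw [this, Finset.image_id]
  have hφmem : ∀ B, B ∈ sumBlocks (ZMod n) k x → φ B ∈ sumBlocks (ZMod n) k ((u : ZMod n) * x) := by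
    intro B hB
    rw [mem_sumBlocks] at hB ⊢
    constructor
    · rw [hφdef]; simpa using (Finset.card_image_of_injective B hinj).trans hB.1
    · rw [hφdef]
      simp only [Finset.sum_image (fun a _ b _ hab => hinj hab)]
      simp only [id_eq]
      rw [← Finset.mul_sum, ← hB.2]
      rfl
  have hψmem : ∀ C, C ∈ sumBlocks (ZMod n) k ((u : ZMod n) * x) → ψ C ∈ sumBlocks (ZMod n) k x := by
    intro C hC
    rw [mem_sumBlocks] at hC ⊢
    have hinj' : Function.Injective (fun t : ZMod n => ((u⁻¹ : (ZMod n)ˣ) : ZMod n) * t) :=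
      fun a b hab => by simpa using congrArg (fun z => (u : ZMod n) * z) hab
    constructor
    · rw [hψdef]; simpa using (Finset.card_image_of_injective C hinj').trans hC.1
    · rw [hψdef]
      simp only [Finset.sum_image (fun a _ b _ hab => hinj' hab), id_eq]
      rw [← Finset.mul_sum]
      have : C.sum id = (u : ZMod n) * x := hC.2
      simp only [id_eq] at this
      rw [this, ← mul_assoc]
      simp
  have hφψ : ∀ C, φ (ψ C) = C := by
    intro C
    simp only [hφdef, hψdef, Finset.image_image]
    have : ((fun t => (u : ZMod n) * t) ∘ (fun t => ((u⁻¹ : (ZMod n)ˣ) : ZMod n) * t)) = id := by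
      funext t; simp [← mul_assoc]
    rw [this, Finset.image_id]
  constructor
  · obtain ⟨B, hB⟩ := Finset.nonempty_iff_ne_empty.mpr hne
    exact Finset.nonempty_iff_ne_empty.mp ⟨φ B, hφmem B hB⟩
  · refine ⟨r, fun z => ?_⟩
    rw [← hr (((u⁻¹ : (ZMod n)ˣ) : ZMod n) * z)]
    apply (Finset.card_nbij' ψ φ ?_ ?_ ?_ ?_)
    · intro C hC
      rw [Finset.mem_coe, Finset.mem_filter] at hC ⊢
      refine ⟨hψmem C hC.1, ?_⟩
      rw [hψdef]
      exact Finset.mem_image_of_mem _ hC.2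
    · intro B hB
      rw [Finset.mem_coe, Finset.mem_filter] at hB ⊢
      refine ⟨hφmem B hB.1, ?_⟩
      rw [hφdef]
      simp only [Finset.mem_image]
      exact ⟨_, hB.2, by rw [← mul_assoc]; simp⟩
    · intro C _; exact hφψ C
    · intro B _; exact hψφ B

theorem stmt10 (n k : ℕ) [NeZero n] (hk2 : 2 ≤ k) (hkn : k ≤ n - 1)
    (x₁ x₂ : ZMod n) (hg : Nat.gcd x₁.val n = Nat.gcd x₂.val n) :
    isOneDesign (ZMod n) k x₁ ↔ isOneDesign (ZMod n) k x₂ := by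
  obtain ⟨u₁, h₁⟩ := exists_unit_mul_gcd n x₁
  obtain ⟨u₂, h₂⟩ := exists_unit_mul_gcd n x₂
  rw [hg] at h₁
  have h12 : x₂ = ((u₂ * u₁⁻¹ : (ZMod n)ˣ) : ZMod n) * x₁ := by
    rw [h₂, h₁]
    simp [Units.val_mul, mul_assoc]
  have h21 : x₁ = ((u₁ * u₂⁻¹ : (ZMod n)ˣ) : ZMod n) * x₂ := by
    rw [h₂, h₁]
    simp [Units.val_mul, mul_assoc]
  exact ⟨fun h => h12 ▸ unit_mul_design n k _ x₁ h,
         fun h => h21 ▸ unit_mul_design n k _ x₂ h⟩
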